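/- arXiv:1305.4519 — 2 statements merged into one kernel-verified Lean document; each statement's English description precedes it below -/
import Mathlib

section
/- Let G be a graph in which every two distinct cycles are edge-disjoint (a cactus forest). Then G contains no subdivision of K_4 minus an edge. -/
open SimpleGraph Walk

section Aux

variable {V : Type*} {G : SimpleGraph V}

/-- If the common support of two walks is contained in a single vertex, they share no edge. -/
lemma aux_edge_disjoint {a b c d t : V} {p : G.Walk a b} {q : G.Walk c d}
    (h : ∀ v, v ∈ p.support → v ∈ q.support → v = t) :
    ∀ e ∈ p.edges, e ∉ q.edges := by
  intro e
  induction e using Sym2.ind with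
  | _ x y =>
    intro he he'
    have hne := (p.adj_of_mem_edges he).ne
    have hx := h x (p.fst_mem_support_of_mem_edges he) (q.fst_mem_support_of_mem_edges he')
    have hy := h y (p.snd_mem_support_of_mem_edges he) (q.snd_mem_support_of_mem_edges he')
    exact hne (hx.trans hy.symm)

lemma aux_start_not_mem_tail {y z : V} {q : G.Walk y z} (hq : q.IsPath) :
    y ∉ q.support.tail := by
  have hnd := hq.support_nodup
  rw [q.support_eq_cons] at hnd
  exact (List.nodup_cons.mp hnd).1

lemma aux_exists_edge {x y : V} (p : G.Walk x y) (h : x ≠ y) : ∃ e, e ∈ p.edges := by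
  cases p with
  | nil => exact absurd rfl h
  | @cons _ v' _ h' q =>
    refine ⟨s(x, v'), ?_⟩
    rw [Walk.edges_cons]
    exact List.mem_cons_self

lemma aux_mem_pair {v x y : V} (h : v ∈ ({x, y} : Set V)) : v = x ∨ v = y := by
  simpa using h

lemma aux_pair_ne₁ {x y u v : V} (h1 : x ≠ u) (h2 : x ≠ v) :
    ({x, y} : Set V) ≠ {u, v} := by
  intro h
  have hx : x ∈ ({u, v} : Set V) := h ▸ Set.mem_insert x {y}
  rcases aux_mem_pair hx with h' | h'
  · exact h1 h'
  · exact h2 h'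

lemma aux_pair_ne₂ {x y u v : V} (h1 : y ≠ u) (h2 : y ≠ v) :
    ({x, y} : Set V) ≠ {u, v} := by
  intro h
  have hy : y ∈ ({u, v} : Set V) := h ▸ (by simp : y ∈ ({x, y} : Set V))
  rcases aux_mem_pair hy with h' | h'
  · exact h1 h'
  · exact h2 h'

lemma aux_inter₁ {v x y b : V} (hxb : x ≠ b) (hxy : x ≠ y)
    (h₁ : v = x ∨ v = b) (h₂ : v = b ∨ v = y) : v = b := by
  rcases h₁ with rfl | rfl
  · rcases h₂ with h | h
    · exact h
    · exact absurd h hxy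
  · rfl

lemma aux_inter₂ {v b x y : V} (hxb : x ≠ b) (hxy : x ≠ y)
    (h₁ : v = b ∨ v = x) (h₂ : v = b ∨ v = y) : v = b := by
  rcases h₁ with rfl | rfl
  · rfl
  · rcases h₂ with h | h
    · exact absurd h hxb
    · exact absurd h hxy

lemma aux_inter₃ {v b x y z : V} (h1 : x ≠ y) (h2 : x ≠ z)
    (h₁ : v = b ∨ v = x) (h₂ : v = y ∨ v = z) : v = b := by
  rcases h₁ with rfl | rfl
  · rfl
  · rcases h₂ with h | h
    · exact absurd h h1
    · exact absurd h h2

lemma aux_inter₄ {v x y c : V} (h1 : x ≠ y) (h2 : x ≠ c)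
    (h₁ : v = x ∨ v = c) (h₂ : v = y ∨ v = c) : v = c := by
  rcases h₁ with rfl | rfl
  · rcases h₂ with h | h
    · exact absurd h h1
    · exact h
  · rfl

/-- Gluing three internally disjoint paths between three distinct vertices gives a cycle. -/
lemma aux_cycle {x y z : V} (hxy : x ≠ y) (hyz : y ≠ z) (hxz : x ≠ z)
    {p : G.Walk x y} {q : G.Walk y z} {r : G.Walk z x}
    (hp : p.IsPath) (hq : q.IsPath) (hr : r.IsPath)
    (hpq : ∀ v, v ∈ p.support → v ∈ q.support → v = y)
    (hqr : ∀ v, v ∈ q.support → v ∈ r.support → v = z)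
    (hpr : ∀ v, v ∈ p.support → v ∈ r.support → v = x) :
    (p.append (q.append r)).IsCycle := by
  constructor
  · constructor
    · constructor
      rw [Walk.edges_append, Walk.edges_append]
      rw [List.nodup_append, List.nodup_append]
      refine ⟨hp.edges_nodup, ⟨hq.edges_nodup, hr.edges_nodup, ?_⟩, ?_⟩
      · exact fun e he e' he' hee => aux_edge_disjoint hqr e he (by subst hee; exact he')
      · intro e he e' he' hee
        subst hee
        rcases List.mem_append.mp he' with h' | h'
        · exact aux_edge_disjoint hpq e he h'
        · exact aux_edge_disjoint hpr e he h'
    · cases p with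
      | nil => exact absurd rfl hxy
      | cons h' q' => simp [Walk.cons_append]
  · rw [Walk.tail_support_append, Walk.tail_support_append]
    rw [List.nodup_append, List.nodup_append]
    have hpnd : p.support.tail.Nodup := hp.support_nodup.sublist (List.tail_sublist _)
    have hqnd : q.support.tail.Nodup := hq.support_nodup.sublist (List.tail_sublist _)
    have hrnd : r.support.tail.Nodup := hr.support_nodup.sublist (List.tail_sublist _)
    refine ⟨hpnd, ⟨hqnd, hrnd, ?_⟩, ?_⟩
    · intro v hv v' hv' hvv
      subst hvv
      have := hqr v (List.mem_of_mem_tail hv) (List.mem_of_mem_tail hv')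
      subst this
      exact aux_start_not_mem_tail hr hv'
    · intro v hv v' hv' hvv
      subst hvv
      rcases List.mem_append.mp hv' with h' | h'
      · have := hpq v (List.mem_of_mem_tail hv) (List.mem_of_mem_tail h')
        subst this
        exact aux_start_not_mem_tail hq h'
      · have := hpr v (List.mem_of_mem_tail hv) (List.mem_of_mem_tail h')
        subst this
        exact aux_start_not_mem_tail hp hv

end Aux

/-- `G` is a cactus forest: any two cycles sharing an edge have the same edge set,
i.e. every two distinct cycles are edge-disjoint. -/
def IsCactusForest {V : Type*} (G : SimpleGraph V) : Prop :=
  ∀ (u v : V) (c₁ : G.Walk u u) (c₂ : G.Walk v v), c₁.IsCycle → c₂.IsCycle →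
    (∃ e, e ∈ c₁.edges ∧ e ∈ c₂.edges) → {e | e ∈ c₁.edges} = {e | e ∈ c₂.edges}

/-- `G` contains a subdivision of `K₄` minus an edge: four distinct branch vertices
`a, b, c, d` and internally disjoint paths realizing the five edges
`ab, ac, ad, bc, bd`. -/
def HasK4MinusESubdivision {V : Type*} (G : SimpleGraph V) : Prop :=
  ∃ (a b c d : V), a ≠ b ∧ a ≠ c ∧ a ≠ d ∧ b ≠ c ∧ b ≠ d ∧ c ≠ d ∧
  ∃ (p₁ : G.Walk a b) (p₂ : G.Walk a c) (p₃ : G.Walk a d)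
    (p₄ : G.Walk b c) (p₅ : G.Walk b d),
    p₁.IsPath ∧ p₂.IsPath ∧ p₃.IsPath ∧ p₄.IsPath ∧ p₅.IsPath ∧
    ∀ L ∈ [(p₁.support, ({a, b} : Set V)), (p₂.support, {a, c}), (p₃.support, {a, d}),
           (p₄.support, {b, c}), (p₅.support, {b, d})],
    ∀ M ∈ [(p₁.support, ({a, b} : Set V)), (p₂.support, {a, c}), (p₃.support, {a, d}),
           (p₄.support, {b, c}), (p₅.support, {b, d})],
      L ≠ M → ∀ x, x ∈ L.1 → x ∈ M.1 → x ∈ L.2 ∧ x ∈ M.2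

/-- A cactus forest (every two distinct cycles edge-disjoint) contains no
subdivision of `K₄` minus an edge. -/
theorem cactusForest_no_K4MinusE_subdivision {V : Type*} (G : SimpleGraph V)
    (hG : IsCactusForest G) : ¬ HasK4MinusESubdivision G := by
  rintro ⟨a, b, c, d, hab, hac, had, hbc, hbd, hcd,
    p₁, p₂, p₃, p₄, p₅, hp₁, hp₂, hp₃, hp₄, hp₅, hdisj⟩
  -- extract pairwise intersection conditions
  have key : ∀ (s₁ : List V) (S₁ : Set V) (s₂ : List V) (S₂ : Set V),
      (s₁, S₁) ∈ [(p₁.support, ({a, b} : Set V)), (p₂.support, {a, c}), (p₃.support, {a, d}),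
           (p₄.support, {b, c}), (p₅.support, {b, d})] →
      (s₂, S₂) ∈ [(p₁.support, ({a, b} : Set V)), (p₂.support, {a, c}), (p₃.support, {a, d}),
           (p₄.support, {b, c}), (p₅.support, {b, d})] →
      S₁ ≠ S₂ → ∀ x, x ∈ s₁ → x ∈ s₂ → x ∈ S₁ ∧ x ∈ S₂ := by
    intro s₁ S₁ s₂ S₂ h₁ h₂ hne x hx hx'
    exact hdisj _ h₁ _ h₂ (fun h => hne (congrArg Prod.snd h)) x hx hx'
  have mem1 : (p₁.support, ({a, b} : Set V)) ∈ [(p₁.support, ({a, b} : Set V)),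
      (p₂.support, {a, c}), (p₃.support, {a, d}), (p₄.support, {b, c}),
      (p₅.support, {b, d})] := by simp
  have mem2 : (p₂.support, ({a, c} : Set V)) ∈ [(p₁.support, ({a, b} : Set V)),
      (p₂.support, {a, c}), (p₃.support, {a, d}), (p₄.support, {b, c}),
      (p₅.support, {b, d})] := by simp
  have mem3 : (p₃.support, ({a, d} : Set V)) ∈ [(p₁.support, ({a, b} : Set V)),
      (p₂.support, {a, c}), (p₃.support, {a, d}), (p₄.support, {b, c}),
      (p₅.support, {b, d})] := by simp
  have mem4 : (p₄.support, ({b, c} : Set V)) ∈ [(p₁.support, ({a, b} : Set V)),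
      (p₂.support, {a, c}), (p₃.support, {a, d}), (p₄.support, {b, c}),
      (p₅.support, {b, d})] := by simp
  have mem5 : (p₅.support, ({b, d} : Set V)) ∈ [(p₁.support, ({a, b} : Set V)),
      (p₂.support, {a, c}), (p₃.support, {a, d}), (p₄.support, {b, c}),
      (p₅.support, {b, d})] := by simp
  have ne12 : ({a, b} : Set V) ≠ {a, c} := aux_pair_ne₂ hab.symm hbc
  have ne13 : ({a, b} : Set V) ≠ {a, d} := aux_pair_ne₂ hab.symm hbd
  have ne14 : ({a, b} : Set V) ≠ {b, c} := aux_pair_ne₁ hab hac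
  have ne15 : ({a, b} : Set V) ≠ {b, d} := aux_pair_ne₁ hab had
  have ne24 : ({a, c} : Set V) ≠ {b, c} := aux_pair_ne₁ hab hac
  have ne25 : ({a, c} : Set V) ≠ {b, d} := aux_pair_ne₁ hab had
  have ne35 : ({a, d} : Set V) ≠ {b, d} := aux_pair_ne₁ hab had
  have ne45 : ({b, c} : Set V) ≠ {b, d} := aux_pair_ne₂ hbc.symm hcd
  -- intersection facts
  have h14 : ∀ v, v ∈ p₁.support → v ∈ p₄.support → v = b := by
    intro v hv hv'
    obtain ⟨h₁, h₂⟩ := key _ _ _ _ mem1 mem4 ne14 v hv hv'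
    exact aux_inter₁ hab hac (aux_mem_pair h₁) (aux_mem_pair h₂)
  have h42 : ∀ v, v ∈ p₄.support → v ∈ p₂.reverse.support → v = c := by
    intro v hv hv'
    rw [Walk.support_reverse, List.mem_reverse] at hv'
    obtain ⟨h₁, h₂⟩ := key _ _ _ _ mem4 mem2 (Ne.symm ne24) v hv hv'
    exact aux_inter₄ hab.symm hbc (aux_mem_pair h₁) (aux_mem_pair h₂)
  have h12 : ∀ v, v ∈ p₁.support → v ∈ p₂.reverse.support → v = a := by
    intro v hv hv'
    rw [Walk.support_reverse, List.mem_reverse] at hv'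
    obtain ⟨h₁, h₂⟩ := key _ _ _ _ mem1 mem2 ne12 v hv hv'
    exact aux_inter₂ hab.symm hbc (aux_mem_pair h₁) (aux_mem_pair h₂)
  have h15 : ∀ v, v ∈ p₁.support → v ∈ p₅.support → v = b := by
    intro v hv hv'
    obtain ⟨h₁, h₂⟩ := key _ _ _ _ mem1 mem5 ne15 v hv hv'
    exact aux_inter₁ hab had (aux_mem_pair h₁) (aux_mem_pair h₂)
  have h53 : ∀ v, v ∈ p₅.support → v ∈ p₃.reverse.support → v = d := by
    intro v hv hv'
    rw [Walk.support_reverse, List.mem_reverse] at hv'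
    obtain ⟨h₁, h₂⟩ := key _ _ _ _ mem5 mem3 (Ne.symm ne35) v hv hv'
    exact aux_inter₄ hab.symm hbd (aux_mem_pair h₁) (aux_mem_pair h₂)
  have h13 : ∀ v, v ∈ p₁.support → v ∈ p₃.reverse.support → v = a := by
    intro v hv hv'
    rw [Walk.support_reverse, List.mem_reverse] at hv'
    obtain ⟨h₁, h₂⟩ := key _ _ _ _ mem1 mem3 ne13 v hv hv'
    exact aux_inter₂ hab.symm hbd (aux_mem_pair h₁) (aux_mem_pair h₂)
  have h54 : ∀ v, v ∈ p₅.support → v ∈ p₄.support → v = b := by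
    intro v hv hv'
    obtain ⟨h₁, h₂⟩ := key _ _ _ _ mem5 mem4 (Ne.symm ne45) v hv hv'
    exact aux_inter₂ hbd.symm hcd.symm (aux_mem_pair h₁) (aux_mem_pair h₂)
  have h52 : ∀ v, v ∈ p₅.support → v ∈ p₂.support → v = b := by
    intro v hv hv'
    obtain ⟨h₁, h₂⟩ := key _ _ _ _ mem5 mem2 (Ne.symm ne25) v hv hv'
    exact aux_inter₃ had.symm hcd.symm (aux_mem_pair h₁) (aux_mem_pair h₂)
  -- the two cycles
  set w₁ : G.Walk a a := p₁.append (p₄.append p₂.reverse) with hw₁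
  set w₂ : G.Walk a a := p₁.append (p₅.append p₃.reverse) with hw₂
  have hc₁ : w₁.IsCycle :=
    aux_cycle hab hbc hac hp₁ hp₄ hp₂.reverse h14 h42 h12
  have hc₂ : w₂.IsCycle :=
    aux_cycle hab hbd had hp₁ hp₅ hp₃.reverse h15 h53 h13
  -- they share an edge of p₁
  obtain ⟨e₁, he₁⟩ := aux_exists_edge p₁ hab
  have he₁w₁ : e₁ ∈ w₁.edges := by
    rw [hw₁, Walk.edges_append]; exact List.mem_append_left _ he₁
  have he₁w₂ : e₁ ∈ w₂.edges := by
    rw [hw₂, Walk.edges_append]; exact List.mem_append_left _ he₁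
  have hsets := hG a a w₁ w₂ hc₁ hc₂ ⟨e₁, he₁w₁, he₁w₂⟩
  -- but an edge of p₅ is in w₂ and not in w₁
  obtain ⟨e₅, he₅⟩ := aux_exists_edge p₅ hbd
  have he₅w₂ : e₅ ∈ w₂.edges := by
    rw [hw₂, Walk.edges_append, Walk.edges_append]
    exact List.mem_append_right _ (List.mem_append_left _ he₅)
  have he₅w₁ : e₅ ∉ w₁.edges := by
    rw [hw₁, Walk.edges_append, Walk.edges_append]
    intro h
    rcases List.mem_append.mp h with h' | h'
    · exact aux_edge_disjoint (fun v hv hv' => h15 v hv' hv) e₅ he₅ h'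
    · rcases List.mem_append.mp h' with h'' | h''
      · exact aux_edge_disjoint h54 e₅ he₅ h''
      · have h52' : ∀ v, v ∈ p₅.support → v ∈ p₂.reverse.support → v = b := by
          intro v hv hv'
          rw [Walk.support_reverse, List.mem_reverse] at hv'
          exact h52 v hv hv'
        exact aux_edge_disjoint h52' e₅ he₅ h''
  exact he₅w₁ (Set.ext_iff.mp hsets.symm e₅ |>.mp he₅w₂)
end

section
/- Let G be a graph containing no subdivision of K_4 minus an edge. Then every two distinct cycles of G are edge-disjoint. -/
namespace K4eAux
open SimpleGraph
variable {V : Type*} {G : SimpleGraph V}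


lemma end_mem_support_tail {a b : V} (w : G.Walk a b) (hw : w.length ≠ 0) :
    b ∈ w.support.tail := by
  cases w with
  | nil => simp at hw
  | cons h q => simp

lemma length_ne_zero_of_ne {a b : V} (w : G.Walk a b) (hab : a ≠ b) : w.length ≠ 0 :=
  fun h => hab (Walk.eq_of_length_eq_zero h)

lemma exists_interior {u v : V} (w : G.Walk u v) (hw : w.IsPath) (hl : 2 ≤ w.length) :
    ∃ z, z ∈ w.support ∧ z ≠ u ∧ z ≠ v := by
  cases w with
  | nil => simp at hl
  | cons h q =>
    rename_i z
    refine ⟨z, by simp, fun hz => h.ne hz.symm, fun hz => ?_⟩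
    subst hz
    have h1 : z ∈ q.support.tail := by
      refine end_mem_support_tail q ?_
      simp [Walk.length_cons] at hl; omega
    have h2 : q.support.Nodup := hw.of_cons.support_nodup
    rw [q.support_eq_cons] at h2
    exact (List.nodup_cons.mp h2).1 h1

lemma edges_of_length_one {u v : V} (w : G.Walk u v) (h : w.length = 1) :
    w.edges = [s(u, v)] := by
  cases w with
  | nil => simp at h
  | cons hadj q =>
    cases q with
    | nil => simp
    | cons h2 q2 => simp [Walk.length_cons] at h

section
variable [DecidableEq V]

lemma cycle_split {s t : V} {C : G.Walk s s} (hC : C.IsCycle) (ht : t ∈ C.support)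
    (hst : s ≠ t) :
    (C.takeUntil t ht).IsPath ∧ (C.dropUntil t ht).IsPath ∧
      ∀ z, z ∈ (C.takeUntil t ht).support → z ∈ (C.dropUntil t ht).support →
        z = s ∨ z = t := by
  set T := C.takeUntil t ht with hT
  set D := C.dropUntil t ht with hD
  have hspec : T.append D = C := C.take_spec ht
  have hsup : C.support = T.support ++ D.support.tail := by
    rw [← hspec, Walk.support_append]
  have hTc : T.support = s :: T.support.tail := T.support_eq_cons
  have htail : C.support.tail = T.support.tail ++ D.support.tail := by
    rw [hsup, hTc]; rfl
  have hnd := hC.support_nodup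
  rw [htail, List.nodup_append] at hnd
  obtain ⟨nd1, nd2, hdisj⟩ := hnd
  have hsT : s ∈ D.support.tail :=
    end_mem_support_tail D (length_ne_zero_of_ne D (Ne.symm hst))
  have htD : t ∈ T.support.tail :=
    end_mem_support_tail T (length_ne_zero_of_ne T hst)
  refine ⟨?_, ?_, ?_⟩
  · refine Walk.IsPath.mk' ?_
    rw [hTc, List.nodup_cons]
    exact ⟨fun hs => hdisj _ hs _ hsT rfl, nd1⟩
  · refine Walk.IsPath.mk' ?_
    rw [D.support_eq_cons, List.nodup_cons]
    exact ⟨fun hmem => hdisj _ htD _ hmem rfl, nd2⟩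
  · intro z hzT hzD
    rw [hTc, List.mem_cons] at hzT
    rw [D.support_eq_cons, List.mem_cons] at hzD
    rcases hzT with rfl | hzT
    · exact Or.inl rfl
    rcases hzD with rfl | hzD
    · exact Or.inr rfl
    exact absurd hzD (fun h => hdisj _ hzT _ h rfl)

lemma path_split {a b c : V} {R : G.Walk a b} (hR : R.IsPath) (hc : c ∈ R.support) :
    (b ≠ c → b ∉ (R.takeUntil c hc).support) ∧
      (a ≠ c → a ∉ (R.dropUntil c hc).support) ∧
      ∀ z, z ∈ (R.takeUntil c hc).support → z ∈ (R.dropUntil c hc).support → z = c := by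
  set T := R.takeUntil c hc with hT
  set D := R.dropUntil c hc with hD
  have hspec : T.append D = R := R.take_spec hc
  have hsup : R.support = T.support ++ D.support.tail := by
    rw [← hspec, Walk.support_append]
  have hnd := hR.support_nodup
  rw [hsup, List.nodup_append] at hnd
  obtain ⟨nd1, nd2, hdisj⟩ := hnd
  have hcommon : ∀ z, z ∈ T.support → z ∈ D.support → z = c := by
    intro z hzT hzD
    rw [D.support_eq_cons, List.mem_cons] at hzD
    rcases hzD with rfl | hzD
    · rfl
    · exact absurd hzD (fun h => hdisj _ hzT _ h rfl)
  refine ⟨fun hbc hmem => ?_, fun hac hmem => ?_, hcommon⟩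
  · have hb : b ∈ D.support.tail :=
      end_mem_support_tail D (length_ne_zero_of_ne D (Ne.symm hbc))
    exact hdisj _ hmem _ hb rfl
  · exact hac (hcommon a T.start_mem_support hmem)

end

lemma first_hit (S : Set V) : ∀ {p x : V} (w : G.Walk p x), w.IsPath → x ∈ S →
    ∃ b', b' ∈ S ∧ ∃ q : G.Walk p b', q.IsPath ∧
      (∀ z ∈ q.support, z ∈ w.support) ∧
      (∀ z ∈ q.support, z ∈ S → z = b') ∧
      ∃ t, q.support ++ t = w.support := by
  intro p x w
  induction w with
  | nil =>
    rename_i pp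
    intro _ hx
    exact ⟨pp, hx, Walk.nil, by simp, by simp, by simp, [], by simp⟩
  | cons h q ih =>
    rename_i a m xx
    intro hpath hx
    by_cases hpS : a ∈ S
    · exact ⟨a, hpS, Walk.nil, by simp, by simp, fun z hz => by simp at hz; subst hz; exact fun _ => rfl,
        (Walk.cons h q).support.tail, by simp⟩
    · obtain ⟨b', hb'S, r, hr, hsub, honly, t, hpre⟩ := ih hpath.of_cons hx
      refine ⟨b', hb'S, Walk.cons h r, ?_, ?_, ?_, t, ?_⟩
      · rw [Walk.isPath_def, Walk.support_cons, List.nodup_cons]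
        refine ⟨fun hmem => ?_, hr.support_nodup⟩
        have : a ∈ q.support := hsub a hmem
        have := hpath.support_nodup
        rw [Walk.support_cons, List.nodup_cons] at this
        exact this.1 ‹a ∈ q.support›
      · intro z hz
        rw [Walk.support_cons, List.mem_cons] at hz ⊢
        exact hz.imp id (fun h2 => hsub z h2)
      · intro z hz hzS
        rw [Walk.support_cons, List.mem_cons] at hz
        rcases hz with rfl | hz
        · exact absurd hzS hpS
        · exact honly z hz hzS
      · rw [Walk.support_cons, Walk.support_cons, ← hpre]; simp

lemma mem_support_closed_iff {s : V} {w : G.Walk s s} (hw : w.length ≠ 0) {z : V} :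
    z ∈ w.support ↔ z ∈ w.support.tail := by
  constructor
  · intro hz
    rw [w.support_eq_cons, List.mem_cons] at hz
    rcases hz with rfl | hz
    · exact end_mem_support_tail w hw
    · exact hz
  · intro hz
    rw [w.support_eq_cons]
    exact List.mem_cons_of_mem _ hz

lemma mem_support_rotate [DecidableEq V] {s u : V} {c : G.Walk s s} (hc : c.IsCycle)
    (h : u ∈ c.support) {z : V} : z ∈ (c.rotate u h).support ↔ z ∈ c.support := by
  have h1 : c.length ≠ 0 := by have := hc.three_le_length; omega
  have hrot : (c.rotate u h).IsCycle := hc.rotate h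
  have h2 : (c.rotate u h).length ≠ 0 := by have := hrot.three_le_length; omega
  rw [mem_support_closed_iff h1, mem_support_closed_iff h2]
  exact (c.support_rotate u h).mem_iff

lemma theta {a b c d : V} (hab : a ≠ b)
    (R₀ Rc Rd : G.Walk a b) (h₀ : R₀.IsPath) (hRc : Rc.IsPath) (hRd : Rd.IsPath)
    (hcm : c ∈ Rc.support) (hca : c ≠ a) (hcb : c ≠ b)
    (hdm : d ∈ Rd.support) (hda : d ≠ a) (hdb : d ≠ b)
    (D0c : ∀ z, z ∈ R₀.support → z ∈ Rc.support → z = a ∨ z = b)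
    (D0d : ∀ z, z ∈ R₀.support → z ∈ Rd.support → z = a ∨ z = b)
    (Dcd : ∀ z, z ∈ Rc.support → z ∈ Rd.support → z = a ∨ z = b) :
    HasK4MinusESubdivision G := by
  classical
  have hcd : c ≠ d := by
    intro h
    rcases Dcd c hcm (h ▸ hdm) with h' | h'
    exacts [hca h', hcb h']
  obtain ⟨hTc_nb', hDc_na', hComc⟩ := path_split hRc hcm
  obtain ⟨hTd_nb', hDd_na', hComd⟩ := path_split hRd hdm
  set Tc := Rc.takeUntil c hcm with hTcdef
  set Dc := Rc.dropUntil c hcm with hDcdef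
  set Td := Rd.takeUntil d hdm with hTddef
  set Dd := Rd.dropUntil d hdm with hDddef
  have hTc_nb : b ∉ Tc.support := hTc_nb' (Ne.symm hcb)
  have hDc_na : a ∉ Dc.support := hDc_na' (Ne.symm hca)
  have hTd_nb : b ∉ Td.support := hTd_nb' (Ne.symm hdb)
  have hDd_na : a ∉ Dd.support := hDd_na' (Ne.symm hda)
  have hTcsub : Tc.support ⊆ Rc.support := Rc.support_takeUntil_subset hcm
  have hDcsub : Dc.support ⊆ Rc.support := Rc.support_dropUntil_subset hcm
  have hTdsub : Td.support ⊆ Rd.support := Rd.support_takeUntil_subset hdm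
  have hDdsub : Dd.support ⊆ Rd.support := Rd.support_dropUntil_subset hdm
  have memrev : ∀ {y z : V} (w : G.Walk y z) (x : V), x ∈ w.reverse.support ↔ x ∈ w.support := by
    intro y z w x; rw [Walk.support_reverse, List.mem_reverse]
  have h12 : ∀ x, x ∈ R₀.support → x ∈ Tc.support →
      x ∈ ({a, b} : Set V) ∧ x ∈ ({a, c} : Set V) := by
    intro x h0 hT
    rcases D0c x h0 (hTcsub hT) with rfl | rfl
    · exact ⟨by simp, by simp⟩
    · exact absurd hT hTc_nb
  have h13 : ∀ x, x ∈ R₀.support → x ∈ Td.support →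
      x ∈ ({a, b} : Set V) ∧ x ∈ ({a, d} : Set V) := by
    intro x h0 hT
    rcases D0d x h0 (hTdsub hT) with rfl | rfl
    · exact ⟨by simp, by simp⟩
    · exact absurd hT hTd_nb
  have h14 : ∀ x, x ∈ R₀.support → x ∈ Dc.reverse.support →
      x ∈ ({a, b} : Set V) ∧ x ∈ ({b, c} : Set V) := by
    intro x h0 hD
    rw [memrev] at hD
    rcases D0c x h0 (hDcsub hD) with rfl | rfl
    · exact absurd hD hDc_na
    · exact ⟨by simp, by simp⟩
  have h15 : ∀ x, x ∈ R₀.support → x ∈ Dd.reverse.support →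
      x ∈ ({a, b} : Set V) ∧ x ∈ ({b, d} : Set V) := by
    intro x h0 hD
    rw [memrev] at hD
    rcases D0d x h0 (hDdsub hD) with rfl | rfl
    · exact absurd hD hDd_na
    · exact ⟨by simp, by simp⟩
  have h23 : ∀ x, x ∈ Tc.support → x ∈ Td.support →
      x ∈ ({a, c} : Set V) ∧ x ∈ ({a, d} : Set V) := by
    intro x h1 h2
    rcases Dcd x (hTcsub h1) (hTdsub h2) with rfl | rfl
    · exact ⟨by simp, by simp⟩
    · exact absurd h1 hTc_nb
  have h24 : ∀ x, x ∈ Tc.support → x ∈ Dc.reverse.support →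
      x ∈ ({a, c} : Set V) ∧ x ∈ ({b, c} : Set V) := by
    intro x h1 h2
    rw [memrev] at h2
    have := hComc x h1 h2
    subst this
    exact ⟨by simp, by simp⟩
  have h25 : ∀ x, x ∈ Tc.support → x ∈ Dd.reverse.support →
      x ∈ ({a, c} : Set V) ∧ x ∈ ({b, d} : Set V) := by
    intro x h1 h2
    rw [memrev] at h2
    rcases Dcd x (hTcsub h1) (hDdsub h2) with rfl | rfl
    · exact absurd h2 hDd_na
    · exact absurd h1 hTc_nb
  have h34 : ∀ x, x ∈ Td.support → x ∈ Dc.reverse.support →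
      x ∈ ({a, d} : Set V) ∧ x ∈ ({b, c} : Set V) := by
    intro x h1 h2
    rw [memrev] at h2
    rcases Dcd x (hDcsub h2) (hTdsub h1) with rfl | rfl
    · exact absurd h2 hDc_na
    · exact absurd h1 hTd_nb
  have h35 : ∀ x, x ∈ Td.support → x ∈ Dd.reverse.support →
      x ∈ ({a, d} : Set V) ∧ x ∈ ({b, d} : Set V) := by
    intro x h1 h2
    rw [memrev] at h2
    have := hComd x h1 h2
    subst this
    exact ⟨by simp, by simp⟩
  have h45 : ∀ x, x ∈ Dc.reverse.support → x ∈ Dd.reverse.support →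
      x ∈ ({b, c} : Set V) ∧ x ∈ ({b, d} : Set V) := by
    intro x h1 h2
    rw [memrev] at h1 h2
    rcases Dcd x (hDcsub h1) (hDdsub h2) with rfl | rfl
    · exact absurd h1 hDc_na
    · exact ⟨by simp, by simp⟩
  refine ⟨a, b, c, d, hab, Ne.symm hca, Ne.symm hda, Ne.symm hcb, Ne.symm hdb, hcd,
    R₀, Tc, Td, Dc.reverse, Dd.reverse, h₀, hRc.takeUntil hcm, hRd.takeUntil hdm,
    (hRc.dropUntil hcm).reverse, (hRd.dropUntil hdm).reverse, ?_⟩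
  intro L hL M hM hne x hxL hxM
  simp only [List.mem_cons, List.not_mem_nil, or_false] at hL hM
  rcases hL with rfl | rfl | rfl | rfl | rfl <;>
    rcases hM with rfl | rfl | rfl | rfl | rfl <;>
    first
      | exact absurd rfl hne
      | exact h12 x hxL hxM
      | exact (h12 x hxM hxL).symm
      | exact h13 x hxL hxM
      | exact (h13 x hxM hxL).symm
      | exact h14 x hxL hxM
      | exact (h14 x hxM hxL).symm
      | exact h15 x hxL hxM
      | exact (h15 x hxM hxL).symm
      | exact h23 x hxL hxM
      | exact (h23 x hxM hxL).symm
      | exact h24 x hxL hxM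
      | exact (h24 x hxM hxL).symm
      | exact h25 x hxL hxM
      | exact (h25 x hxM hxL).symm
      | exact h34 x hxL hxM
      | exact (h34 x hxM hxL).symm
      | exact h35 x hxL hxM
      | exact (h35 x hxM hxL).symm
      | exact h45 x hxL hxM
      | exact (h45 x hxM hxL).symm

lemma mem_of_getLast?_eq {α} {l : List α} {a : α} (h : l.getLast? = some a) : a ∈ l := by
  cases l with
  | nil => simp at h
  | cons b t =>
    rw [List.getLast?_eq_getLast (l := b :: t) (by simp)] at h
    rw [← Option.some_inj.mp h]
    exact List.getLast_mem _

lemma suffix_nil {α} {l1 t l : List α} {x : α} (h : l1 ++ t = l ++ [x]) (hx : x ∈ l1)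
    (nd : (l1 ++ t).Nodup) : t = [] := by
  by_contra ht
  have h1 : (l1 ++ t).getLast? = t.getLast? := List.getLast?_append_of_ne_nil _ ht
  rw [h, List.getLast?_concat] at h1
  have h2 : x ∈ t := mem_of_getLast?_eq h1.symm
  rw [List.nodup_append] at nd
  exact nd.2.2 _ hx _ h2 rfl

/-- From a `theta`-configuration on the base cycle `c₁`, get a `K₄ - e` subdivision. -/
lemma build [DecidableEq V] {u a' b' : V} {c₁ : G.Walk u u} (h₁ : c₁.IsCycle)
    (ha' : a' ∈ c₁.support) (hb' : b' ∈ c₁.support) (hab : a' ≠ b')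
    (P : G.Walk a' b') (hP : P.IsPath)
    (HP : ∀ z ∈ P.support, z ∈ c₁.support → z = a' ∨ z = b')
    (Hcase : (∃ cc, cc ∈ P.support ∧ cc ≠ a' ∧ cc ≠ b') ∨ s(a', b') ∉ c₁.edges) :
    HasK4MinusESubdivision G := by
  set C := c₁.rotate a' ha' with hCdef
  have hC : C.IsCycle := h₁.rotate ha'
  have hb'C : b' ∈ C.support := (mem_support_rotate h₁ ha').mpr hb'
  obtain ⟨hQ1path, hQ2path, hcom⟩ := cycle_split hC hb'C hab
  set Q₁ := C.takeUntil b' hb'C with hQ1def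
  set Q₂ := C.dropUntil b' hb'C with hQ2def
  have hlen : Q₁.length + Q₂.length = C.length := by
    have := congrArg Walk.length (C.take_spec hb'C)
    rwa [Walk.length_append] at this
  have hC3 : 3 ≤ C.length := hC.three_le_length
  have hQ1pos : Q₁.length ≠ 0 := length_ne_zero_of_ne _ hab
  have hQ2pos : Q₂.length ≠ 0 := length_ne_zero_of_ne _ (Ne.symm hab)
  have hCedges : ∀ e, e ∈ C.edges → e ∈ c₁.edges := fun e he =>
    (c₁.rotate_edges a' ha').mem_iff.mp he
  have hQ1S : ∀ z ∈ Q₁.support, z ∈ c₁.support := fun z hz =>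
    (mem_support_rotate h₁ ha').mp (C.support_takeUntil_subset hb'C hz)
  have hQ2S : ∀ z ∈ Q₂.support, z ∈ c₁.support := fun z hz =>
    (mem_support_rotate h₁ ha').mp (C.support_dropUntil_subset hb'C hz)
  have memrev : ∀ {y z : V} (w : G.Walk y z) (x : V),
      x ∈ w.reverse.support ↔ x ∈ w.support := by
    intro y z w x; rw [Walk.support_reverse, List.mem_reverse]
  have DQ : ∀ z, z ∈ Q₁.support → z ∈ Q₂.reverse.support → z = a' ∨ z = b' := by
    intro z h1 h2
    rw [memrev] at h2
    exact hcom z h1 h2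
  have DPQ1 : ∀ z, z ∈ P.support → z ∈ Q₁.support → z = a' ∨ z = b' := by
    intro z h1 h2; exact HP z h1 (hQ1S z h2)
  have DPQ2 : ∀ z, z ∈ P.support → z ∈ Q₂.reverse.support → z = a' ∨ z = b' := by
    intro z h1 h2; rw [memrev] at h2; exact HP z h1 (hQ2S z h2)
  rcases Hcase with ⟨cc, hccm, hcca, hccb⟩ | hne
  · rcases le_or_gt 2 Q₁.length with hl | hl
    · obtain ⟨dd, hddm, hdda, hddb⟩ := exists_interior Q₁ hQ1path hl
      exact theta hab (Q₂.reverse) P Q₁ hQ2path.reverse hP hQ1path hccm hcca hccb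
        hddm hdda hddb (fun z h1 h2 => DPQ2 z h2 h1) (fun z h1 h2 => DQ z h2 h1) DPQ1
    · have hl2 : 2 ≤ Q₂.reverse.length := by rw [Walk.length_reverse]; omega
      obtain ⟨dd, hddm, hdda, hddb⟩ := exists_interior Q₂.reverse hQ2path.reverse hl2
      exact theta hab Q₁ P Q₂.reverse hQ1path hP hQ2path.reverse hccm hcca hccb
        hddm hdda hddb (fun z h1 h2 => DPQ1 z h2 h1) DQ DPQ2
  · have hl1 : 2 ≤ Q₁.length := by
      rcases Nat.lt_or_ge Q₁.length 2 with h | h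
      · exfalso
        have h1 : Q₁.length = 1 := by omega
        have := edges_of_length_one Q₁ h1
        exact hne (hCedges _ (C.edges_takeUntil_subset hb'C (this ▸ List.mem_singleton_self _)))
      · exact h
    have hl2 : 2 ≤ Q₂.reverse.length := by
      rw [Walk.length_reverse]
      rcases Nat.lt_or_ge Q₂.length 2 with h | h
      · exfalso
        have h1 : Q₂.length = 1 := by omega
        have h2 := edges_of_length_one Q₂ h1
        have h3 : s(b', a') ∈ C.edges :=
          C.edges_dropUntil_subset hb'C (h2 ▸ List.mem_singleton_self _)
        rw [Sym2.eq_swap] at h3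
        exact hne (hCedges _ h3)
      · exact h
    obtain ⟨cc, hccm, hcca, hccb⟩ := exists_interior Q₁ hQ1path hl1
    obtain ⟨dd, hddm, hdda, hddb⟩ := exists_interior Q₂.reverse hQ2path.reverse hl2
    exact theta hab P Q₁ Q₂.reverse hP hQ1path hQ2path.reverse hccm hcca hccb
      hddm hdda hddb DPQ1 DPQ2 DQ

/-- Case where some vertex of `c₂` is off `c₁`. -/
lemma case2 [DecidableEq V] {u v x y p : V} {c₁ : G.Walk u u} {c₂ : G.Walk v v}
    (h₁ : c₁.IsCycle) (h₂ : c₂.IsCycle)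
    (he₁ : s(x, y) ∈ c₁.edges) (he₂ : s(x, y) ∈ c₂.edges)
    (hp2 : p ∈ c₂.support) (hpno : p ∉ c₁.support) :
    HasK4MinusESubdivision G := by
  have hxS : x ∈ c₁.support := c₁.fst_mem_support_of_mem_edges he₁
  have hyS : y ∈ c₁.support := c₁.snd_mem_support_of_mem_edges he₁
  have hx2 : x ∈ c₂.support := c₂.fst_mem_support_of_mem_edges he₂
  have hy2 : y ∈ c₂.support := c₂.snd_mem_support_of_mem_edges he₂
  have hxy : x ≠ y := (c₁.adj_of_mem_edges he₁).ne
  set S : Set V := {z | z ∈ c₁.support} with hSdef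
  set d2 := c₂.rotate p hp2 with hd2def
  have hd2 : d2.IsCycle := h₂.rotate hp2
  have hx_d : x ∈ d2.support := (mem_support_rotate h₂ hp2).mpr hx2
  have hpx : p ≠ x := fun h => hpno (h ▸ hxS)
  obtain ⟨hw1p, hw2p, hcom12⟩ := cycle_split hd2 hx_d hpx
  set w₁ := d2.takeUntil x hx_d with hw1def
  set w₂ := d2.dropUntil x hx_d with hw2def
  obtain ⟨b', hb'S, Pb, hPb, hPbsub, hPbonly, tb, hpreb⟩ :=
    first_hit S w₁ hw1p (show x ∈ S from hxS)
  obtain ⟨a', ha'S, Pa, hPa, hPasub', hPaonly, ta, hprea⟩ :=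
    first_hit S w₂.reverse hw2p.reverse (show x ∈ S from hxS)
  have hPasub : ∀ z ∈ Pa.support, z ∈ w₂.support := by
    intro z hz
    have := hPasub' z hz
    rwa [Walk.support_reverse, List.mem_reverse] at this
  have hpa : p ≠ a' := fun h => hpno (h ▸ ha'S)
  have hpb : p ≠ b' := fun h => hpno (h ▸ hb'S)
  have hy_d : y ∈ d2.support := (mem_support_rotate h₂ hp2).mpr hy2
  have hspec : w₁.append w₂ = d2 := d2.take_spec hx_d
  have hsupd2 : d2.support = w₁.support ++ w₂.support.tail := by
    rw [← hspec, Walk.support_append]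
  have hab : a' ≠ b' := by
    intro h
    have ha'w2 : a' ∈ w₂.support := hPasub a' Pa.end_mem_support
    have hb'w1 : b' ∈ w₁.support := hPbsub b' Pb.end_mem_support
    rcases hcom12 a' (h ▸ hb'w1) ha'w2 with h' | h'
    · exact hpa h'.symm
    subst h'
    have hyw : y ∈ w₁.support ∨ y ∈ w₂.support.tail := by
      rw [hsupd2] at hy_d
      exact List.mem_append.mp hy_d
    rcases hyw with hy1 | hy2'
    · have hxlast : ∃ l, w₁.support = l ++ [a'] := by
        refine ⟨w₁.reverse.support.tail.reverse, ?_⟩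
        have h5 : w₁.reverse.support = a' :: w₁.reverse.support.tail :=
          w₁.reverse.support_eq_cons
        have h6 : w₁.support = w₁.reverse.support.reverse := by
          rw [Walk.support_reverse, List.reverse_reverse]
        rw [h6, h5]
        simp
      obtain ⟨l, hl⟩ := hxlast
      have hx_in_Pb : a' ∈ Pb.support := by rw [h]; exact Pb.end_mem_support
      have htb : tb = [] :=
        suffix_nil (hpreb.trans hl) hx_in_Pb (hpreb ▸ hw1p.support_nodup)
      rw [htb, List.append_nil] at hpreb
      rw [← hpreb] at hy1
      have h7 := hPbonly y hy1 (show y ∈ S from hyS)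
      rw [← h] at h7
      exact hxy h7.symm
    · have hy2'' : y ∈ w₂.support := w₂.support_eq_cons ▸ List.mem_cons_of_mem _ hy2'
      have hxlast : ∃ l, w₂.support.reverse = l ++ [a'] := by
        refine ⟨w₂.support.tail.reverse, ?_⟩
        rw [w₂.support_eq_cons]
        simp
      obtain ⟨l, hl⟩ := hxlast
      have hprea' : Pa.support ++ ta = w₂.support.reverse := by
        rw [hprea, Walk.support_reverse]
      have hx_in_Pa : a' ∈ Pa.support := Pa.end_mem_support
      have hta : ta = [] :=
        suffix_nil (hprea'.trans hl) hx_in_Pa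
          (hprea' ▸ (List.nodup_reverse.mpr hw2p.support_nodup))
      rw [hta, List.append_nil] at hprea'
      have h8 : y ∈ Pa.support := by rw [hprea']; exact List.mem_reverse.mpr hy2''
      have h9 := hPaonly y h8 (show y ∈ S from hyS)
      exact hxy h9.symm
  set P := Pa.reverse.append Pb with hPdef
  have hPsup : P.support = Pa.reverse.support ++ Pb.support.tail := Walk.support_append _ _
  have hdisj : ∀ z, z ∈ Pa.support → z ∈ Pb.support.tail → False := by
    intro z hza hzb
    have hzb' : z ∈ Pb.support := Pb.support_eq_cons ▸ List.mem_cons_of_mem _ hzb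
    have h1 : z ∈ w₁.support := hPbsub z hzb'
    have h2 : z ∈ w₂.support := hPasub z hza
    rcases hcom12 z h1 h2 with rfl | rfl
    · have h3 : Pb.support = z :: Pb.support.tail := Pb.support_eq_cons
      have hnd := hPb.support_nodup
      rw [h3, List.nodup_cons] at hnd
      exact hnd.1 hzb
    · have hza' := hPaonly z hza (show z ∈ S from hxS)
      have hzb'' := hPbonly z hzb' (show z ∈ S from hxS)
      exact hab (hza'.symm.trans hzb'')
  have hP : P.IsPath := by
    refine Walk.IsPath.mk' ?_
    rw [hPsup, List.nodup_append]
    refine ⟨hPa.reverse.support_nodup, hPb.support_nodup.sublist (List.tail_sublist _), ?_⟩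
    intro z hza z' hzb hzz
    subst hzz
    rw [Walk.support_reverse, List.mem_reverse] at hza
    exact hdisj z hza hzb
  have HP : ∀ z ∈ P.support, z ∈ c₁.support → z = a' ∨ z = b' := by
    intro z hz hzS
    rw [hPsup, List.mem_append] at hz
    rcases hz with hz | hz
    · rw [Walk.support_reverse, List.mem_reverse] at hz
      exact Or.inl (hPaonly z hz hzS)
    · exact Or.inr (hPbonly z (Pb.support_eq_cons ▸ List.mem_cons_of_mem _ hz) hzS)
  have hpP : p ∈ P.support := by
    rw [hPsup, List.mem_append]
    left
    rw [Walk.support_reverse, List.mem_reverse]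
    exact Pa.start_mem_support
  exact build h₁ ha'S hb'S hab P hP HP (Or.inl ⟨p, hpP, hpa, hpb⟩)

lemma edge_transfer (hG : ¬ HasK4MinusESubdivision G) {u v : V}
    {c₁ : G.Walk u u} {c₂ : G.Walk v v} (h₁ : c₁.IsCycle) (h₂ : c₂.IsCycle)
    {e : Sym2 V} (he₁ : e ∈ c₁.edges) (he₂ : e ∈ c₂.edges)
    {f : Sym2 V} (hf₂ : f ∈ c₂.edges) : f ∈ c₁.edges := by
  classical
  by_contra hf₁
  apply hG
  induction e using Sym2.ind with
  | _ x y =>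
  induction f using Sym2.ind with
  | _ p q =>
  by_cases hp : p ∈ c₁.support
  · by_cases hq : q ∈ c₁.support
    · -- both endpoints of f on c₁ : the single edge f is the connecting path
      have hadj : G.Adj p q := c₂.adj_of_mem_edges hf₂
      set P : G.Walk p q := Walk.cons hadj Walk.nil with hPdef
      have hP : P.IsPath := by
        refine Walk.IsPath.mk' ?_
        simp [hPdef, hadj.ne]
      have HP : ∀ z ∈ P.support, z ∈ c₁.support → z = p ∨ z = q := by
        intro z hz _
        simpa [hPdef] using hz
      exact build h₁ hp hq hadj.ne P hP HP (Or.inr hf₁)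
    · exact case2 h₁ h₂ he₁ he₂ (c₂.snd_mem_support_of_mem_edges hf₂) hq
  · exact case2 h₁ h₂ he₁ he₂ (c₂.fst_mem_support_of_mem_edges hf₂) hp

end K4eAux

/-- A graph with no subdivision of `K₄` minus an edge is a cactus forest:
every two distinct cycles are edge-disjoint. -/
theorem no_K4MinusE_subdivision_cactusForest {V : Type*} (G : SimpleGraph V)
    (hG : ¬ HasK4MinusESubdivision G) : IsCactusForest G := by
  intro u v c₁ c₂ h₁ h₂ he
  obtain ⟨e, he₁, he₂⟩ := he
  ext f
  simp only [Set.mem_setOf_eq]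
  exact ⟨fun hf => K4eAux.edge_transfer hG h₂ h₁ he₂ he₁ hf,
    fun hf => K4eAux.edge_transfer hG h₁ h₂ he₁ he₂ hf⟩
end
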